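/- Under Algorithm 2 with rigid movements in FSYNC and no crash: if the two robots are at distance d ≤ 1 with d > 0, then after one round they are at distance 1 + d > 1, and after one more round they gather (distance 0). If d > 1, they gather in one round. -/
import Mathlib


/-- One round of Algorithm 2 (FSYNC, rigid, no crash): both robots move.
If the distance exceeds 1, both go to the midpoint; otherwise the right robot
goes to the left robot's position and the left robot goes to the point at
distance 1 to the right of the right robot. -/
noncomputable def step2 (c : ℝ × ℝ) : ℝ × ℝ :=
  let l := min c.1 c.2
  let r := max c.1 c.2
  if 1 < r - l then ((l + r) / 2, (l + r) / 2) else (r + 1, l)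

/-- Algorithm 2, FSYNC, rigid, no crash: if `0 < b - a ≤ 1` the robots are at
distance `1 + (b - a) > 1` after one round and gather after one more round;
if `b - a > 1` they gather in one round. -/
theorem algo2_no_crash (a b : ℝ) (hab : a < b) :
    (b - a ≤ 1 →
      step2 (a, b) = (b + 1, a) ∧
      (b + 1) - a = 1 + (b - a) ∧ 1 < (b + 1) - a ∧
      (step2 (step2 (a, b))).1 = (step2 (step2 (a, b))).2) ∧
    (1 < b - a → (step2 (a, b)).1 = (step2 (a, b)).2) := by
  have hmin : min a b = a := min_eq_left hab.le
  have hmax : max a b = b := max_eq_right hab.le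
  constructor
  · intro h
    have h1 : step2 (a, b) = (b + 1, a) := by
      simp [step2, hmin, hmax, not_lt.mpr h]
    refine ⟨h1, by ring, by linarith, ?_⟩
    rw [h1]
    have hmin2 : min (b + 1) a = a := min_eq_right (by linarith)
    have hmax2 : max (b + 1) a = b + 1 := max_eq_left (by linarith)
    simp [step2, hmin2, hmax2, show (1:ℝ) < b + 1 - a by linarith]
  · intro h
    simp [step2, hmin, hmax, h]
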